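/- Let G be a finite simple graph with maximum degree at most Δ, let n ≥ 2 and f ≥ 1 be reals, and set p = f·ln(n)/Δ, assuming p ≤ 1. Suppose each vertex of G is sampled independently with probability p. Then for every vertex v, the probability that v has at least 6·f·ln(n) sampled neighbors is at most n^{−f}. -/

import Mathlib

open MeasureTheory ProbabilityTheory

theorem log6_aux : (7:ℝ)/6 ≤ Real.log 6 := by
  rw [Real.le_log_iff_exp_le (by norm_num)]
  have h7 : Real.exp 7 < 6 ^ 6 := by
    have h1 : Real.exp 7 = (Real.exp 1) ^ 7 := by
      rw [← Real.exp_nat_mul]; norm_num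
    have hpos := Real.exp_pos 1
    nlinarith [pow_lt_pow_left₀ Real.exp_one_lt_d9 hpos.le (n := 7) (by norm_num)]
  by_contra hc
  push_neg at hc
  have : (6:ℝ) ^ 6 < Real.exp (7/6) ^ 6 :=
    pow_lt_pow_left₀ hc (by norm_num) (by norm_num)
  rw [← Real.exp_nat_mul] at this
  norm_num at this
  linarith


/-- Let `G` be a finite simple graph with maximum degree at most `Δ`, let `n ≥ 2` and `f ≥ 1`
be reals, and set `p = f·ln(n)/Δ`, assuming `p ≤ 1`. Suppose each vertex of `G` is sampled
independently with probability `p`. Then for every vertex `v`, the probability that `v` has at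
least `6·f·ln(n)` sampled neighbors is at most `n^{−f}`. -/
theorem few_sampled_neighbors {V Ω : Type*} [Fintype V] [DecidableEq V] [MeasurableSpace Ω]
    (G : SimpleGraph V) [DecidableRel G.Adj]
    (P : Measure Ω) [IsProbabilityMeasure P]
    (Δ f n p : ℝ) (hΔ : 0 < Δ) (hmaxdeg : ∀ v : V, (G.degree v : ℝ) ≤ Δ)
    (hn : 2 ≤ n) (hf : 1 ≤ f) (hp : p = f * Real.log n / Δ) (hp1 : p ≤ 1)
    (Vsamp : Ω → Finset V)
    (hmeas : ∀ v : V, MeasurableSet {ω | v ∈ Vsamp ω})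
    (hprob : ∀ v : V, P {ω | v ∈ Vsamp ω} = ENNReal.ofReal p)
    (hindep : iIndepSet (fun v : V => {ω | v ∈ Vsamp ω}) P)
    (v : V) :
    (P {ω | 6 * f * Real.log n
        ≤ (((G.neighborFinset v).filter (fun u => u ∈ Vsamp ω)).card : ℝ)}).toReal
      ≤ n ^ (-f) := by
  set x : ℝ := f * Real.log n with hxdef
  have hlogn : (0:ℝ) < Real.log n := Real.log_pos (by linarith)
  have hx : 0 < x := mul_pos (by linarith) hlogn
  have hp0 : 0 ≤ p := by
    rw [hp]; positivity
  set k : ℕ := ⌈6 * x⌉₊ with hkdef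
  have hk6 : 6 * x ≤ (k : ℝ) := Nat.le_ceil _
  have hkpos : 0 < k := Nat.ceil_pos.mpr (by positivity)
  have hk0 : (0:ℝ) < (k : ℝ) := Nat.cast_pos.mpr hkpos
  set d : ℕ := (G.neighborFinset v).card with hddef
  have hdΔ : (d : ℝ) ≤ Δ := by
    rw [hddef, SimpleGraph.card_neighborFinset_eq_degree]
    exact hmaxdeg v
  -- event inclusion
  have hsub : {ω | 6 * f * Real.log n
        ≤ (((G.neighborFinset v).filter (fun u => u ∈ Vsamp ω)).card : ℝ)}
      ⊆ ⋃ S ∈ (G.neighborFinset v).powersetCard k, ⋂ u ∈ S, {ω | u ∈ Vsamp ω} := by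
    intro ω hω
    simp only [Set.mem_setOf_eq] at hω
    have hkcard : k ≤ ((G.neighborFinset v).filter (fun u => u ∈ Vsamp ω)).card := by
      rw [hkdef]
      apply Nat.ceil_le.mpr
      calc 6 * x = 6 * f * Real.log n := by rw [hxdef]; ring
        _ ≤ _ := hω
    obtain ⟨S, hSsub, hScard⟩ := Finset.exists_subset_card_eq hkcard
    simp only [Set.mem_iUnion, Set.mem_iInter, Set.mem_setOf_eq]
    exact ⟨S, Finset.mem_powersetCard.mpr ⟨hSsub.trans (Finset.filter_subset _ _), hScard⟩,
      fun u hu => (Finset.mem_filter.mp (hSsub hu)).2⟩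
  -- measure bound
  have hmeasure : P {ω | 6 * f * Real.log n
        ≤ (((G.neighborFinset v).filter (fun u => u ∈ Vsamp ω)).card : ℝ)}
      ≤ ENNReal.ofReal ((d.choose k : ℝ) * p ^ k) := by
    calc P _ ≤ P (⋃ S ∈ (G.neighborFinset v).powersetCard k, ⋂ u ∈ S, {ω | u ∈ Vsamp ω}) :=
          measure_mono hsub
      _ ≤ ∑ S ∈ (G.neighborFinset v).powersetCard k, P (⋂ u ∈ S, {ω | u ∈ Vsamp ω}) :=
          measure_biUnion_finset_le _ _
      _ = ∑ S ∈ (G.neighborFinset v).powersetCard k, ENNReal.ofReal p ^ k := by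
          apply Finset.sum_congr rfl
          intro S hS
          rw [hindep.meas_biInter S]
          rw [Finset.prod_congr rfl (fun u _ => hprob u), Finset.prod_const,
            (Finset.mem_powersetCard.mp hS).2]
      _ = ((G.neighborFinset v).powersetCard k).card • ENNReal.ofReal p ^ k :=
          (Finset.sum_const _)
      _ = ENNReal.ofReal ((d.choose k : ℝ) * p ^ k) := by
          rw [Finset.card_powersetCard, ← hddef, nsmul_eq_mul,
            ← ENNReal.ofReal_pow hp0, ← ENNReal.ofReal_natCast,
            ← ENNReal.ofReal_mul (by positivity)]
  -- real-number bound
  have hreal : (d.choose k : ℝ) * p ^ k ≤ n ^ (-f) := by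
    have hΔp : Δ * p = x := by
      rw [hp]; field_simp
    have hfact : (0:ℝ) < (k.factorial : ℝ) := Nat.cast_pos.mpr k.factorial_pos
    have h1 : (d.choose k : ℝ) * p ^ k ≤ (d : ℝ) ^ k / k.factorial * p ^ k := by
      apply mul_le_mul_of_nonneg_right _ (pow_nonneg hp0 k)
      have := Nat.choose_le_pow_div (α := ℝ) k d
      push_cast at this ⊢
      exact this
    have h2 : (d : ℝ) ^ k / k.factorial * p ^ k ≤ x ^ k / k.factorial := by
      rw [div_mul_eq_mul_div, ← mul_pow, div_le_div_iff_of_pos_right hfact]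
      have hdp : (d : ℝ) * p ≤ x := hΔp ▸ mul_le_mul_of_nonneg_right hdΔ hp0
      exact pow_le_pow_left₀ (by positivity) hdp k
    have h3 : x ^ k / k.factorial ≤ Real.exp (-x) := by
      have hkk : ((k:ℝ)) ^ k / k.factorial ≤ Real.exp 1 ^ k := by
        have := Real.pow_div_factorial_le_exp (x := (k:ℝ)) hk0.le k
        rwa [show Real.exp (k:ℝ) = Real.exp 1 ^ k by rw [← Real.exp_nat_mul]; ring_nf] at this
      have heq : x ^ k / k.factorial = (x / k) ^ k * ((k:ℝ) ^ k / k.factorial) := by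
        field_simp
        rw [div_pow, div_mul_cancel₀ _ (by positivity)]
      have hstep : x ^ k / k.factorial ≤ (x / k) ^ k * Real.exp 1 ^ k := by
        rw [heq]
        exact mul_le_mul_of_nonneg_left hkk (by positivity)
      have hstep2 : (x / k) ^ k * Real.exp 1 ^ k = (x * Real.exp 1 / k) ^ k := by
        rw [← mul_pow]; ring_nf
      have hstep3 : (x * Real.exp 1 / k) ^ k ≤ (Real.exp 1 / 6) ^ k := by
        apply pow_le_pow_left₀ (by positivity)
        rw [div_le_div_iff₀ hk0 (by norm_num)]
        nlinarith [Real.exp_pos 1, hk6, hx]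
      have hstep4 : (Real.exp 1 / 6 : ℝ) ^ k ≤ Real.exp (-x) := by
        have h6 : (Real.exp 1 / 6 : ℝ) = Real.exp (1 - Real.log 6) := by
          rw [Real.exp_sub, Real.exp_log (by norm_num)]
        rw [h6, ← Real.exp_nat_mul, Real.exp_le_exp]
        nlinarith [log6_aux, hk6, hx, hk0]
      linarith
    have hexp : Real.exp (-x) = n ^ (-f) := by
      rw [Real.rpow_def_of_pos (by linarith : (0:ℝ) < n)]
      congr 1
      rw [hxdef]; ring
    linarith
  calc (P _).toReal ≤ ((d.choose k : ℝ) * p ^ k) :=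
      ENNReal.toReal_le_of_le_ofReal (by positivity) hmeasure
    _ ≤ n ^ (-f) := hreal
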